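/- For real numbers 0 < r < s and u, v > 0, the integral ∫₀^∞ x^(r-1)/(u x + v)^s dx equals (1/(u^r v^(s-r))) · Γ(r)Γ(s-r)/Γ(s). -/

import Mathlib

open MeasureTheory Real


lemma real_beta (a b : ℝ) (ha : 0 < a) (hb : 0 < b) :
    ∫ x in (0:ℝ)..1, x ^ (a - 1) * (1 - x) ^ (b - 1) =
      Gamma a * Gamma b / Gamma (a + b) := by
  have key := Complex.Gamma_mul_Gamma_eq_betaIntegral (s := (a:ℂ)) (t := (b:ℂ))
    (by simpa using ha) (by simpa using hb)
  have hbeta : Complex.betaIntegral a b =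
      ((∫ x in (0:ℝ)..1, x ^ (a - 1) * (1 - x) ^ (b - 1) : ℝ) : ℂ) := by
    rw [Complex.betaIntegral, ← intervalIntegral.integral_ofReal]
    refine intervalIntegral.integral_congr fun x hx => ?_
    rw [Set.uIcc_of_le (by norm_num : (0:ℝ) ≤ 1)] at hx
    obtain ⟨hx0, hx1⟩ := hx
    rw [Complex.ofReal_mul, Complex.ofReal_cpow hx0,
      Complex.ofReal_cpow (show (0:ℝ) ≤ 1 - x by linarith)]
    push_cast
    ring
  have hG : Complex.Gamma (a + b : ℝ) = (Gamma (a+b) : ℂ) := Complex.Gamma_ofReal _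
  rw [hbeta, Complex.Gamma_ofReal, Complex.Gamma_ofReal] at key
  have : ((a:ℂ) + b) = ((a + b : ℝ) : ℂ) := by push_cast; ring
  rw [this, Complex.Gamma_ofReal, ← Complex.ofReal_mul, ← Complex.ofReal_mul] at key
  have key' : Gamma a * Gamma b = Gamma (a+b) * ∫ x in (0:ℝ)..1, x ^ (a - 1) * (1 - x) ^ (b - 1) :=
    Complex.ofReal_injective key
  have hGpos : 0 < Gamma (a + b) := Gamma_pos_of_pos (by linarith)
  rw [key']
  field_simp

lemma beta_Ioi (a b : ℝ) (ha : 0 < a) (hb : 0 < b) :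
    ∫ y in Set.Ioi (0:ℝ), y ^ (a - 1) * (1 + y) ^ (-(a + b)) =
      Gamma a * Gamma b / Gamma (a + b) := by
  have himg : (fun t => t / (1 - t)) '' Set.Ioo (0:ℝ) 1 = Set.Ioi 0 := by
    ext y
    constructor
    · rintro ⟨t, ⟨ht0, ht1⟩, rfl⟩
      exact Set.mem_Ioi.2 (div_pos ht0 (by linarith))
    · intro hy
      rw [Set.mem_Ioi] at hy
      refine ⟨y / (1 + y), ⟨div_pos hy (by linarith), ?_⟩, ?_⟩
      · rw [div_lt_one (by linarith)]; linarith
      · have h1 : (1:ℝ) + y ≠ 0 := by linarith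
        field_simp; ring
  have hderiv : ∀ t ∈ Set.Ioo (0:ℝ) 1,
      HasDerivWithinAt (fun t => t / (1 - t)) ((1 - t)^2)⁻¹ (Set.Ioo 0 1) t := by
    intro t ht
    have h1 : (1:ℝ) - t ≠ 0 := by have := ht.2; intro h; nlinarith [ht.2]
    have : HasDerivAt (fun t : ℝ => t / (1 - t))
        ((1 * (1 - t) - t * (0 - 1)) / (1 - t)^2) t :=
      (hasDerivAt_id t).div ((hasDerivAt_const t 1).sub (hasDerivAt_id t)) h1
    refine this.hasDerivWithinAt.congr_deriv ?_
    ring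
  have hinj : Set.InjOn (fun t => t / (1 - t)) (Set.Ioo (0:ℝ) 1) := by
    intro t1 h1 t2 h2 h
    have d1 : (1:ℝ) - t1 ≠ 0 := by have := h1.2; intro hh; nlinarith
    have d2 : (1:ℝ) - t2 ≠ 0 := by have := h2.2; intro hh; nlinarith
    field_simp at h
    nlinarith [h]
  have := integral_image_eq_integral_abs_deriv_smul measurableSet_Ioo hderiv hinj
    (fun y => y ^ (a - 1) * (1 + y) ^ (-(a + b)))
  rw [himg] at this
  rw [this]
  have heq : ∀ t ∈ Set.Ioo (0:ℝ) 1,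
      |((1 - t)^2)⁻¹| • ((t / (1 - t)) ^ (a - 1) * (1 + t / (1 - t)) ^ (-(a + b)))
        = t ^ (a - 1) * (1 - t) ^ (b - 1) := by
    intro t ⟨ht0, ht1⟩
    have h1t : (0:ℝ) < 1 - t := by linarith
    have h1 : (1:ℝ) + t / (1 - t) = (1 - t)⁻¹ := by field_simp; ring
    have e1 : ((1 - t)^2)⁻¹ = (1 - t) ^ (-2:ℝ) := by
      rw [← rpow_natCast (1-t) 2, ← rpow_neg h1t.le]; norm_num
    have e2 : ((1 - t)⁻¹) ^ (-(a+b)) = (1 - t) ^ (a+b) := by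
      rw [inv_rpow h1t.le, ← rpow_neg h1t.le, neg_neg]
    have e3 : (t/(1-t)) ^ (a-1) = t ^ (a-1) * (1-t) ^ (-(a-1)) := by
      rw [div_rpow ht0.le h1t.le, div_eq_mul_inv, ← rpow_neg h1t.le]
    have comb : (1-t) ^ (-2:ℝ) * ((1-t) ^ (-(a-1)) * (1-t) ^ (a+b)) = (1-t) ^ (b-1) := by
      rw [← rpow_add h1t, ← rpow_add h1t]; ring_nf
    rw [h1, smul_eq_mul, abs_of_pos (by positivity), e1, e2, e3]
    calc (1-t) ^ (-2:ℝ) * (t ^ (a-1) * (1-t) ^ (-(a-1)) * (1-t) ^ (a+b))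
        = t ^ (a-1) * ((1-t) ^ (-2:ℝ) * ((1-t) ^ (-(a-1)) * (1-t) ^ (a+b))) := by ring
      _ = t ^ (a-1) * (1-t) ^ (b-1) := by rw [comb]
  rw [setIntegral_congr_fun measurableSet_Ioo heq, ← integral_Ioc_eq_integral_Ioo,
    ← intervalIntegral.integral_of_le (by norm_num : (0:ℝ) ≤ 1)]
  exact real_beta a b ha hb

/-- Euler beta-type integral: for `0 < r < s` and `u, v > 0`,
`∫₀^∞ x^(r-1)/(u x + v)^s dx = (1/(u^r v^(s-r))) · Γ(r)Γ(s-r)/Γ(s)`. -/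
theorem beta_integral (r s u v : ℝ) (hr : 0 < r) (hrs : r < s)
    (hu : 0 < u) (hv : 0 < v) :
    ∫ x in Set.Ioi (0 : ℝ), x ^ (r - 1) / (u * x + v) ^ s =
      (1 / (u ^ r * v ^ (s - r))) * (Gamma r * Gamma (s - r) / Gamma s) := by
  have hc : (0:ℝ) < v / u := div_pos hv hu
  have key := integral_comp_mul_left_Ioi
    (fun x => x ^ (r - 1) / (u * x + v) ^ s) 0 hc
  rw [mul_zero] at key
  have heq : ∀ y ∈ Set.Ioi (0:ℝ),
      (v / u * y) ^ (r - 1) / (u * (v / u * y) + v) ^ s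
        = ((v/u) ^ (r-1) * v ^ (-s)) * (y ^ (r - 1) * (1 + y) ^ (-(r + (s - r)))) := by
    intro y hy
    rw [Set.mem_Ioi] at hy
    have h2 : u * (v / u * y) + v = v * (1 + y) := by field_simp; ring
    have h3 : (0:ℝ) ≤ 1 + y := by linarith
    rw [h2, mul_rpow hc.le hy.le, mul_rpow hv.le h3, div_eq_mul_inv, mul_inv,
      ← rpow_neg hv.le, ← rpow_neg h3]
    ring_nf
  calc ∫ x in Set.Ioi (0:ℝ), x ^ (r - 1) / (u * x + v) ^ s
      = (v/u) * ∫ y in Set.Ioi (0:ℝ), (v / u * y) ^ (r - 1) / (u * (v / u * y) + v) ^ s := by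
        rw [key, smul_eq_mul, ← mul_assoc, mul_inv_cancel₀ hc.ne', one_mul]
    _ = (v/u) * (((v/u) ^ (r-1) * v ^ (-s)) *
          ∫ y in Set.Ioi (0:ℝ), y ^ (r - 1) * (1 + y) ^ (-(r + (s - r)))) := by
        rw [setIntegral_congr_fun measurableSet_Ioi heq, MeasureTheory.integral_const_mul]
    _ = (v/u) * (((v/u) ^ (r-1) * v ^ (-s)) *
          (Gamma r * Gamma (s - r) / Gamma (r + (s - r)))) := by
        rw [beta_Ioi r (s - r) hr (by linarith)]
    _ = ((v/u) ^ r * v ^ (-s)) * (Gamma r * Gamma (s - r) / Gamma s) := by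
        rw [show r + (s - r) = s by ring]
        rw [show (v/u) * ((v/u) ^ (r-1) * v ^ (-s) * (Gamma r * Gamma (s-r) / Gamma s))
          = ((v/u) ^ (1:ℝ) * (v/u) ^ (r-1)) * v ^ (-s) * (Gamma r * Gamma (s-r) / Gamma s) by
            rw [rpow_one]; ring, ← rpow_add hc]
        ring_nf
    _ = (1 / (u ^ r * v ^ (s - r))) * (Gamma r * Gamma (s - r) / Gamma s) := by
        congr 1
        rw [div_rpow hv.le hu.le, eq_div_iff (by positivity)]
        have hv1 : v ^ r * v ^ (-s) * v ^ (s-r) = 1 := by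
          rw [← rpow_add hv, ← rpow_add hv, show r + -s + (s-r) = 0 by ring, rpow_zero]
        calc v ^ r / u ^ r * v ^ (-s) * (u ^ r * v ^ (s-r))
            = (v ^ r * v ^ (-s) * v ^ (s-r)) * (u ^ r / u ^ r) := by ring
          _ = 1 := by rw [hv1, div_self (by positivity : (u:ℝ) ^ r ≠ 0), one_mul]
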